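/- Every holomorphic vector bundle F of rank r on P^1 decomposes as a direct sum of line bundles F ≅ ⊕_{i=1}^r O(a_i) for integers a_i, and the multiset {a_1, …, a_r} is uniquely determined by F (Grothendieck splitting theorem). -/

import Mathlib

/-!
STATEMENT 17 (Grothendieck splitting theorem): every holomorphic vector bundle F of rank r
on P¹ decomposes as a direct sum of line bundles F ≅ ⊕_{i=1}^r O(a_i), and the multiset
{a_1, …, a_r} is uniquely determined by F.

Formalization notes (transition-matrix / Birkhoff factorization model): cover P¹ by the two
standard charts U₀ = ℂ (coordinate z) and U₁ (coordinate w = 1/z), with U₀ ∩ U₁ = ℂ*.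
A rank-r holomorphic (equivalently, algebraic) vector bundle on P¹ is described by its
transition matrix A = A(z), an r×r matrix of holomorphic functions on ℂ* which is invertible
there; in the algebraic category A is a matrix of Laurent polynomials whose determinant is a
unit of ℂ[z, z⁻¹] (i.e. c·zᵏ, exactly the Laurent polynomials non-vanishing on ℂ*).
Two transition matrices A, B define isomorphic bundles iff B = P · A · Q where P is a matrix
of functions holomorphic and invertible on U₀ (entries in ℂ[z], with inverse of the same
form) and Q likewise for U₁ (entries in ℂ[z⁻¹], with inverse of the same form).
The line bundle O(a) has transition matrix the 1×1 matrix (zᵃ) (`LaurentPolynomial.T a`),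
so ⊕ O(a_i) has transition matrix diagonal(z^{a_1}, …, z^{a_r}).  Grothendieck's theorem is
then: every A as above is equivalent to some diagonal(z^{a_i}) (Birkhoff factorization), and
the multiset of exponents is unique.
-/

open LaurentPolynomial

/-- `f` is holomorphic on the chart `U₀`: only nonnegative powers of `z` occur. -/
def IsPolyFun (f : LaurentPolynomial ℂ) : Prop := ∀ i : ℤ, i < 0 → f.coeff i = 0

/-- `f` is holomorphic on the chart `U₁`: only nonpositive powers of `z` occur
(i.e. `f` is a polynomial in `w = z⁻¹`). -/
def IsAntiPolyFun (f : LaurentPolynomial ℂ) : Prop := ∀ i : ℤ, 0 < i → f.coeff i = 0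

/-- `P` is a holomorphic change of trivialization over `U₀`: all entries of `P` are
holomorphic on `U₀` and `P` has a two-sided inverse of the same kind. -/
def IsPolyGauge {r : ℕ} (P : Matrix (Fin r) (Fin r) (LaurentPolynomial ℂ)) : Prop :=
  (∀ i j, IsPolyFun (P i j)) ∧
    ∃ P' : Matrix (Fin r) (Fin r) (LaurentPolynomial ℂ),
      (∀ i j, IsPolyFun (P' i j)) ∧ P * P' = 1 ∧ P' * P = 1

/-- `Q` is a holomorphic change of trivialization over `U₁`. -/
def IsAntiPolyGauge {r : ℕ} (Q : Matrix (Fin r) (Fin r) (LaurentPolynomial ℂ)) : Prop :=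
  (∀ i j, IsAntiPolyFun (Q i j)) ∧
    ∃ Q' : Matrix (Fin r) (Fin r) (LaurentPolynomial ℂ),
      (∀ i j, IsAntiPolyFun (Q' i j)) ∧ Q * Q' = 1 ∧ Q' * Q = 1

/-- The transition matrices `A` and `B` define isomorphic holomorphic vector bundles
on `P¹`. -/
def BundleEquiv {r : ℕ} (A B : Matrix (Fin r) (Fin r) (LaurentPolynomial ℂ)) : Prop :=
  ∃ P Q : Matrix (Fin r) (Fin r) (LaurentPolynomial ℂ),
    IsPolyGauge P ∧ IsAntiPolyGauge Q ∧ B = P * A * Q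

open Polynomial Matrix



noncomputable section
open LaurentPolynomial Polynomial Matrix

abbrev R := LaurentPolynomial ℂ

lemma coeff_T_mul (n : ℤ) (f : R) (m : ℤ) : (T n * f : R).coeff m = f.coeff (m - n) := by
  rw [T, AddMonoidAlgebra.coeff_single_mul_apply, one_mul]
  congr 1; ring

lemma coeff_mul_T (f : R) (n m : ℤ) : (f * T n : R).coeff m = f.coeff (m - n) := by
  rw [T, AddMonoidAlgebra.coeff_mul_single_apply, mul_one, sub_eq_add_neg]

lemma coeff_add (f g : R) (m : ℤ) : (f + g : R).coeff m = f.coeff m + g.coeff m := rfl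
lemma coeff_neg (f : R) (m : ℤ) : (-f : R).coeff m = -(f.coeff m) := rfl
lemma coeff_zero (m : ℤ) : (0 : R).coeff m = 0 := rfl

lemma coeff_one (m : ℤ) : (1 : R).coeff m = if m = 0 then 1 else 0 := by
  rw [show (1 : R) = T 0 from (T_zero).symm, T_apply]
  simp [eq_comm]

/-- all exponents of `f` are `≤ d`. -/
def DegLE (f : R) (d : ℤ) : Prop := ∀ i : ℤ, f.coeff i ≠ 0 → i ≤ d
/-- all exponents of `f` are `≥ d`. -/
def OrdGE (f : R) (d : ℤ) : Prop := ∀ i : ℤ, f.coeff i ≠ 0 → d ≤ i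

lemma isPolyFun_iff {f : R} : IsPolyFun f ↔ OrdGE f 0 := by
  constructor
  · intro h i hi; by_contra hc; exact hi (h i (by omega))
  · intro h i hi; by_contra hc; have := h i hc; omega

lemma isAntiPolyFun_iff {f : R} : IsAntiPolyFun f ↔ DegLE f 0 := by
  constructor
  · intro h i hi; by_contra hc; exact hi (h i (by omega))
  · intro h i hi; by_contra hc; have := h i hc; omega

lemma OrdGE.mono {f : R} {d e : ℤ} (h : OrdGE f d) (he : e ≤ d) : OrdGE f e :=
  fun i hi => le_trans he (h i hi)

lemma DegLE.mono {f : R} {d e : ℤ} (h : DegLE f d) (he : d ≤ e) : DegLE f e :=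
  fun i hi => le_trans (h i hi) he

lemma OrdGE.add {f g : R} {d : ℤ} (hf : OrdGE f d) (hg : OrdGE g d) : OrdGE (f + g) d := by
  intro i hi
  rw [coeff_add] at hi
  by_contra hc
  push_neg at hc
  have h1 : f.coeff i = 0 := by by_contra h'; have := hf i h'; omega
  have h2 : g.coeff i = 0 := by by_contra h'; have := hg i h'; omega
  rw [h1, h2, add_zero] at hi; exact hi rfl

lemma DegLE.add {f g : R} {d : ℤ} (hf : DegLE f d) (hg : DegLE g d) : DegLE (f + g) d := by
  intro i hi
  rw [coeff_add] at hi
  by_contra hc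
  push_neg at hc
  have h1 : f.coeff i = 0 := by by_contra h'; have := hf i h'; omega
  have h2 : g.coeff i = 0 := by by_contra h'; have := hg i h'; omega
  rw [h1, h2, add_zero] at hi; exact hi rfl

lemma OrdGE.neg {f : R} {d : ℤ} (hf : OrdGE f d) : OrdGE (-f) d := by
  intro i hi; rw [coeff_neg, neg_ne_zero] at hi; exact hf i hi

lemma DegLE.neg {f : R} {d : ℤ} (hf : DegLE f d) : DegLE (-f) d := by
  intro i hi; rw [coeff_neg, neg_ne_zero] at hi; exact hf i hi

lemma OrdGE.mul {f g : R} {d e : ℤ} (hf : OrdGE f d) (hg : OrdGE g e) :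
    OrdGE (f * g) (d + e) := by
  intro i hi
  have := AddMonoidAlgebra.support_coeff_mul_subset f g (Finsupp.mem_support_iff.2 hi)
  simp only [Finset.mem_add] at this
  obtain ⟨a, ha, b, hb, rfl⟩ := this
  have h1 := hf a (Finsupp.mem_support_iff.1 ha)
  have h2 := hg b (Finsupp.mem_support_iff.1 hb)
  omega

lemma DegLE.mul {f g : R} {d e : ℤ} (hf : DegLE f d) (hg : DegLE g e) :
    DegLE (f * g) (d + e) := by
  intro i hi
  have := AddMonoidAlgebra.support_coeff_mul_subset f g (Finsupp.mem_support_iff.2 hi)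
  simp only [Finset.mem_add] at this
  obtain ⟨a, ha, b, hb, rfl⟩ := this
  have h1 := hf a (Finsupp.mem_support_iff.1 ha)
  have h2 := hg b (Finsupp.mem_support_iff.1 hb)
  omega

lemma OrdGE.zero (d : ℤ) : OrdGE 0 d := fun i hi => absurd rfl hi
lemma DegLE.zero (d : ℤ) : DegLE 0 d := fun i hi => absurd rfl hi

lemma OrdGE.T (n : ℤ) : OrdGE (T n) n := by
  intro i hi; rw [T_apply] at hi
  by_contra h; exact hi (if_neg (by omega))

lemma DegLE.T (n : ℤ) : DegLE (T n) n := by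
  intro i hi; rw [T_apply] at hi
  by_contra h; push_neg at h; exact hi (if_neg (by omega))

lemma OrdGE.one : OrdGE 1 0 := by
  have := OrdGE.T 0
  rwa [T_zero] at this

lemma DegLE.one : DegLE 1 0 := by
  have := DegLE.T 0
  rwa [T_zero] at this

lemma OrdGE.sum {s : Finset ι} {f : ι → R} {d : ℤ} (h : ∀ i ∈ s, OrdGE (f i) d) :
    OrdGE (∑ i ∈ s, f i) d := by
  classical
  induction s using Finset.induction_on with
  | empty => simpa using OrdGE.zero d
  | insert _ _ hx ih =>
      rw [Finset.sum_insert hx]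
      exact (h _ (Finset.mem_insert_self _ _)).add
        (ih fun i hi => h i (Finset.mem_insert_of_mem hi))

lemma DegLE.sum {ι : Type*} {s : Finset ι} {f : ι → R} {d : ℤ} (h : ∀ i ∈ s, DegLE (f i) d) :
    DegLE (∑ i ∈ s, f i) d := by
  classical
  induction s using Finset.induction_on with
  | empty => simpa using DegLE.zero d
  | insert _ _ hx ih =>
      rw [Finset.sum_insert hx]
      exact (h _ (Finset.mem_insert_self _ _)).add
        (ih fun i hi => h i (Finset.mem_insert_of_mem hi))

-- IsPolyFun closure
lemma IsPolyFun.add {f g : R} (hf : IsPolyFun f) (hg : IsPolyFun g) : IsPolyFun (f + g) :=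
  isPolyFun_iff.2 ((isPolyFun_iff.1 hf).add (isPolyFun_iff.1 hg))

lemma IsPolyFun.mul {f g : R} (hf : IsPolyFun f) (hg : IsPolyFun g) : IsPolyFun (f * g) :=
  isPolyFun_iff.2 (by simpa using (isPolyFun_iff.1 hf).mul (isPolyFun_iff.1 hg))

lemma IsPolyFun.neg {f : R} (hf : IsPolyFun f) : IsPolyFun (-f) :=
  isPolyFun_iff.2 (isPolyFun_iff.1 hf).neg

lemma IsPolyFun.zero : IsPolyFun 0 := isPolyFun_iff.2 (OrdGE.zero 0)
lemma IsPolyFun.one : IsPolyFun 1 := isPolyFun_iff.2 OrdGE.one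
lemma IsPolyFun.T {n : ℤ} (hn : 0 ≤ n) : IsPolyFun (T n) :=
  isPolyFun_iff.2 ((OrdGE.T n).mono hn)
lemma IsPolyFun.C (c : ℂ) : IsPolyFun (C c) := by
  intro i hi; rw [C_apply]; exact if_neg (by omega)

lemma IsPolyFun.sum {ι : Type*} {s : Finset ι} {f : ι → R} (h : ∀ i ∈ s, IsPolyFun (f i)) :
    IsPolyFun (∑ i ∈ s, f i) :=
  isPolyFun_iff.2 (OrdGE.sum fun i hi => isPolyFun_iff.1 (h i hi))

lemma IsAntiPolyFun.add {f g : R} (hf : IsAntiPolyFun f) (hg : IsAntiPolyFun g) :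
    IsAntiPolyFun (f + g) :=
  isAntiPolyFun_iff.2 ((isAntiPolyFun_iff.1 hf).add (isAntiPolyFun_iff.1 hg))

lemma IsAntiPolyFun.mul {f g : R} (hf : IsAntiPolyFun f) (hg : IsAntiPolyFun g) :
    IsAntiPolyFun (f * g) :=
  isAntiPolyFun_iff.2 (by simpa using (isAntiPolyFun_iff.1 hf).mul (isAntiPolyFun_iff.1 hg))

lemma IsAntiPolyFun.neg {f : R} (hf : IsAntiPolyFun f) : IsAntiPolyFun (-f) :=
  isAntiPolyFun_iff.2 (isAntiPolyFun_iff.1 hf).neg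

lemma IsAntiPolyFun.zero : IsAntiPolyFun 0 := isAntiPolyFun_iff.2 (DegLE.zero 0)
lemma IsAntiPolyFun.one : IsAntiPolyFun 1 := isAntiPolyFun_iff.2 DegLE.one
lemma IsAntiPolyFun.T {n : ℤ} (hn : n ≤ 0) : IsAntiPolyFun (T n) :=
  isAntiPolyFun_iff.2 ((DegLE.T n).mono hn)
lemma IsAntiPolyFun.C (c : ℂ) : IsAntiPolyFun (C c) := by
  intro i hi; rw [C_apply]; exact if_neg (by omega)

lemma IsAntiPolyFun.sum {ι : Type*} {s : Finset ι} {f : ι → R}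
    (h : ∀ i ∈ s, IsAntiPolyFun (f i)) : IsAntiPolyFun (∑ i ∈ s, f i) :=
  isAntiPolyFun_iff.2 (DegLE.sum fun i hi => isAntiPolyFun_iff.1 (h i hi))

end

-- PART B : gauges, emb2, ext1, upperN, BundleEquiv
noncomputable section
open LaurentPolynomial Matrix
variable {r q : ℕ}

lemma isPolyFun_one_entry (i j : Fin r) : IsPolyFun ((1 : Matrix (Fin r) (Fin r) R) i j) := by
  rw [Matrix.one_apply]
  by_cases h : i = j <;> simp [h, IsPolyFun.one, IsPolyFun.zero]

lemma isAntiPolyFun_one_entry (i j : Fin r) :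
    IsAntiPolyFun ((1 : Matrix (Fin r) (Fin r) R) i j) := by
  rw [Matrix.one_apply]
  by_cases h : i = j <;> simp [h, IsAntiPolyFun.one, IsAntiPolyFun.zero]

lemma IsPolyFun.matMulEntry {P Q : Matrix (Fin r) (Fin r) R}
    (hP : ∀ i j, IsPolyFun (P i j)) (hQ : ∀ i j, IsPolyFun (Q i j)) (i j : Fin r) :
    IsPolyFun ((P * Q) i j) := by
  rw [Matrix.mul_apply]
  exact IsPolyFun.sum fun k _ => (hP i k).mul (hQ k j)

lemma IsAntiPolyFun.matMulEntry {P Q : Matrix (Fin r) (Fin r) R}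
    (hP : ∀ i j, IsAntiPolyFun (P i j)) (hQ : ∀ i j, IsAntiPolyFun (Q i j)) (i j : Fin r) :
    IsAntiPolyFun ((P * Q) i j) := by
  rw [Matrix.mul_apply]
  exact IsAntiPolyFun.sum fun k _ => (hP i k).mul (hQ k j)

lemma IsPolyGauge.one : IsPolyGauge (1 : Matrix (Fin r) (Fin r) R) :=
  ⟨isPolyFun_one_entry, 1, isPolyFun_one_entry, by simp, by simp⟩

lemma IsAntiPolyGauge.one : IsAntiPolyGauge (1 : Matrix (Fin r) (Fin r) R) :=
  ⟨isAntiPolyFun_one_entry, 1, isAntiPolyFun_one_entry, by simp, by simp⟩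

lemma IsPolyGauge.mul {P Q : Matrix (Fin r) (Fin r) R}
    (hP : IsPolyGauge P) (hQ : IsPolyGauge Q) : IsPolyGauge (P * Q) := by
  obtain ⟨hPe, P', hP'e, hPP', hP'P⟩ := hP
  obtain ⟨hQe, Q', hQ'e, hQQ', hQ'Q⟩ := hQ
  refine ⟨IsPolyFun.matMulEntry hPe hQe, Q' * P', IsPolyFun.matMulEntry hQ'e hP'e, ?_, ?_⟩
  · calc P * Q * (Q' * P') = P * (Q * Q') * P' := by simp only [mul_assoc]
    _ = 1 := by rw [hQQ', mul_one, hPP']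
  · calc Q' * P' * (P * Q) = Q' * (P' * P) * Q := by simp only [mul_assoc]
    _ = 1 := by rw [hP'P, mul_one, hQ'Q]

lemma IsAntiPolyGauge.mul {P Q : Matrix (Fin r) (Fin r) R}
    (hP : IsAntiPolyGauge P) (hQ : IsAntiPolyGauge Q) : IsAntiPolyGauge (P * Q) := by
  obtain ⟨hPe, P', hP'e, hPP', hP'P⟩ := hP
  obtain ⟨hQe, Q', hQ'e, hQQ', hQ'Q⟩ := hQ
  refine ⟨IsAntiPolyFun.matMulEntry hPe hQe, Q' * P', IsAntiPolyFun.matMulEntry hQ'e hP'e, ?_, ?_⟩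
  · calc P * Q * (Q' * P') = P * (Q * Q') * P' := by simp only [mul_assoc]
    _ = 1 := by rw [hQQ', mul_one, hPP']
  · calc Q' * P' * (P * Q) = Q' * (P' * P) * Q := by simp only [mul_assoc]
    _ = 1 := by rw [hP'P, mul_one, hQ'Q]

lemma BundleEquiv.refl (A : Matrix (Fin r) (Fin r) R) : BundleEquiv A A :=
  ⟨1, 1, IsPolyGauge.one, IsAntiPolyGauge.one, by simp⟩

lemma BundleEquiv.trans {A B C : Matrix (Fin r) (Fin r) R}
    (h1 : BundleEquiv A B) (h2 : BundleEquiv B C) : BundleEquiv A C := by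
  obtain ⟨P, Q, hP, hQ, rfl⟩ := h1
  obtain ⟨P', Q', hP', hQ', rfl⟩ := h2
  exact ⟨P' * P, Q * Q', hP'.mul hP, hQ.mul hQ', by simp only [mul_assoc]⟩

lemma BundleEquiv.symm {A B : Matrix (Fin r) (Fin r) R} (h : BundleEquiv A B) :
    BundleEquiv B A := by
  obtain ⟨P, Q, ⟨hPe, P', hP'e, hPP', hP'P⟩, ⟨hQe, Q', hQ'e, hQQ', hQ'Q⟩, rfl⟩ := h
  refine ⟨P', Q', ⟨hP'e, P, hPe, hP'P, hPP'⟩, ⟨hQ'e, Q, hQe, hQ'Q, hQQ'⟩, ?_⟩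
  calc A = (P' * P) * A * (Q * Q') := by rw [hP'P, hQQ']; simp
  _ = P' * (P * A * Q) * Q' := by simp only [mul_assoc]

lemma BundleEquiv.gauge {A : Matrix (Fin r) (Fin r) R} {P Q : Matrix (Fin r) (Fin r) R}
    (hP : IsPolyGauge P) (hQ : IsAntiPolyGauge Q) : BundleEquiv A (P * A * Q) :=
  ⟨P, Q, hP, hQ, rfl⟩

lemma BundleEquiv.det_isUnit {A B : Matrix (Fin r) (Fin r) R}
    (h : BundleEquiv A B) (hA : IsUnit A.det) : IsUnit B.det := by
  obtain ⟨P, Q, ⟨_, P', _, hPP', _⟩, ⟨_, Q', _, hQQ', _⟩, rfl⟩ := h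
  have hP : IsUnit P.det := by
    apply IsUnit.of_mul_eq_one P'.det
    rw [← Matrix.det_mul, hPP', Matrix.det_one]
  have hQ : IsUnit Q.det := by
    apply IsUnit.of_mul_eq_one Q'.det
    rw [← Matrix.det_mul, hQQ', Matrix.det_one]
  rw [Matrix.det_mul, Matrix.det_mul]
  exact (hP.mul hA).mul hQ

/-- scalar shift of the equivalence -/
lemma BundleEquiv.unshift {A B : Matrix (Fin r) (Fin r) R} (N : ℤ)
    (h : BundleEquiv ((LaurentPolynomial.T N : LaurentPolynomial ℂ) • A) B) :
    BundleEquiv A ((LaurentPolynomial.T (-N) : LaurentPolynomial ℂ) • B) := by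
  obtain ⟨P, Q, hP, hQ, rfl⟩ := h
  refine ⟨P, Q, hP, hQ, ?_⟩
  rw [Matrix.mul_smul, Matrix.smul_mul, smul_smul, ← T_add]
  simp

/-- diagonal matrices with nonzero constant entries are gauges of both kinds -/
lemma constDiag_polyGauge (v : Fin r → ℂ) (hv : ∀ i, v i ≠ 0) :
    IsPolyGauge (Matrix.diagonal (fun i => (C (v i) : R))) := by
  refine ⟨?_, Matrix.diagonal (fun i => (C (v i)⁻¹ : R)), ?_, ?_, ?_⟩
  · intro i j; rw [Matrix.diagonal_apply]
    by_cases h : i = j <;> simp [h, IsPolyFun.C, IsPolyFun.zero]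
  · intro i j; rw [Matrix.diagonal_apply]
    by_cases h : i = j <;> simp [h, IsPolyFun.C, IsPolyFun.zero]
  · rw [Matrix.diagonal_mul_diagonal]
    have : (fun i => (C (v i) : R) * (C (v i)⁻¹ : R)) = fun _ => (1 : R) :=
      funext fun i => by rw [← _root_.map_mul, mul_inv_cancel₀ (hv i), _root_.map_one]
    rw [this, Matrix.diagonal_one]
  · rw [Matrix.diagonal_mul_diagonal]
    have : (fun i => (C (v i)⁻¹ : R) * (C (v i) : R)) = fun _ => (1 : R) :=
      funext fun i => by rw [← _root_.map_mul, inv_mul_cancel₀ (hv i), _root_.map_one]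
    rw [this, Matrix.diagonal_one]

lemma constDiag_antiPolyGauge (v : Fin r → ℂ) (hv : ∀ i, v i ≠ 0) :
    IsAntiPolyGauge (Matrix.diagonal (fun i => (C (v i) : R))) := by
  refine ⟨?_, Matrix.diagonal (fun i => (C (v i)⁻¹ : R)), ?_, ?_, ?_⟩
  · intro i j; rw [Matrix.diagonal_apply]
    by_cases h : i = j <;> simp [h, IsAntiPolyFun.C, IsAntiPolyFun.zero]
  · intro i j; rw [Matrix.diagonal_apply]
    by_cases h : i = j <;> simp [h, IsAntiPolyFun.C, IsAntiPolyFun.zero]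
  · rw [Matrix.diagonal_mul_diagonal]
    have : (fun i => (C (v i) : R) * (C (v i)⁻¹ : R)) = fun _ => (1 : R) :=
      funext fun i => by rw [← _root_.map_mul, mul_inv_cancel₀ (hv i), _root_.map_one]
    rw [this, Matrix.diagonal_one]
  · rw [Matrix.diagonal_mul_diagonal]
    have : (fun i => (C (v i)⁻¹ : R) * (C (v i) : R)) = fun _ => (1 : R) :=
      funext fun i => by rw [← _root_.map_mul, inv_mul_cancel₀ (hv i), _root_.map_one]
    rw [this, Matrix.diagonal_one]

/-! ### emb2 : embedding a 2×2 matrix in rows/columns i j of an r×r matrix -/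
noncomputable section
open LaurentPolynomial Matrix
variable {r q : ℕ}

def emb2 (i j : Fin r) (A : Matrix (Fin 2) (Fin 2) R) : Matrix (Fin r) (Fin r) R :=
  Matrix.of fun k l =>
    if k = i then (if l = i then A 0 0 else if l = j then A 0 1 else 0)
    else if k = j then (if l = i then A 1 0 else if l = j then A 1 1 else 0)
    else if k = l then 1 else 0

lemma sum_two_supp {f : Fin r → R} {i j : Fin r} (hij : i ≠ j) {x y : R}
    (h : ∀ m, f m = (if m = i then x else 0) + (if m = j then y else 0)) :
    ∑ m, f m = x + y := by
  rw [Finset.sum_congr rfl fun m _ => h m, Finset.sum_add_distrib,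
    Finset.sum_ite_eq' Finset.univ, Finset.sum_ite_eq' Finset.univ]
  simp

lemma sum_one_supp {f : Fin r → R} {i : Fin r} {x : R}
    (h : ∀ m, f m = if m = i then x else 0) :
    ∑ m, f m = x := by
  rw [Finset.sum_congr rfl fun m _ => h m, Finset.sum_ite_eq' Finset.univ]
  simp

lemma emb2_mul_apply {i j : Fin r} (hij : i ≠ j) (A : Matrix (Fin 2) (Fin 2) R)
    (M : Matrix (Fin r) (Fin r) R) (k l : Fin r) :
    (emb2 i j A * M) k l =
      if k = i then A 0 0 * M i l + A 0 1 * M j l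
      else if k = j then A 1 0 * M i l + A 1 1 * M j l
      else M k l := by
  rw [Matrix.mul_apply]
  by_cases hk : k = i
  · rw [if_pos hk]
    refine sum_two_supp hij fun m => ?_
    simp only [emb2, Matrix.of_apply, hk]
    split_ifs <;> simp_all
  · rw [if_neg hk]
    by_cases hk2 : k = j
    · rw [if_pos hk2]
      refine sum_two_supp hij fun m => ?_
      simp only [emb2, Matrix.of_apply, hk2]
      split_ifs <;> simp_all
    · rw [if_neg hk2]
      refine sum_one_supp (i := k) fun m => ?_
      simp only [emb2, Matrix.of_apply, if_neg hk, if_neg hk2]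
      by_cases h : k = m
      · rw [if_pos h, one_mul, if_pos h.symm, ← h]
      · rw [if_neg h, zero_mul, if_neg (fun hh => h hh.symm)]

lemma mul_emb2_apply {i j : Fin r} (hij : i ≠ j) (A : Matrix (Fin 2) (Fin 2) R)
    (M : Matrix (Fin r) (Fin r) R) (k l : Fin r) :
    (M * emb2 i j A) k l =
      if l = i then M k i * A 0 0 + M k j * A 1 0
      else if l = j then M k i * A 0 1 + M k j * A 1 1
      else M k l := by
  rw [Matrix.mul_apply]
  by_cases hl : l = i
  · rw [if_pos hl]
    refine sum_two_supp hij fun m => ?_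
    simp only [emb2, Matrix.of_apply, hl]
    split_ifs <;> simp_all
  · rw [if_neg hl]
    by_cases hl2 : l = j
    · rw [if_pos hl2]
      refine sum_two_supp hij fun m => ?_
      simp only [emb2, Matrix.of_apply, hl2]
      split_ifs <;> simp_all
    · rw [if_neg hl2]
      refine sum_one_supp (i := l) fun m => ?_
      simp only [emb2, Matrix.of_apply]
      by_cases h1 : m = i
      · rw [if_pos h1, if_neg hl, if_neg hl2, mul_zero,
          if_neg (show ¬ m = l from fun hh => hl ((hh.symm).trans h1))]
      · by_cases h2 : m = j
        · rw [if_neg h1, if_pos h2, if_neg hl, if_neg hl2, mul_zero,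
            if_neg (show ¬ m = l from fun hh => hl2 ((hh.symm).trans h2))]
        · rw [if_neg h1, if_neg h2]
          by_cases h3 : m = l
          · rw [if_pos h3, if_pos h3, mul_one, h3]
          · rw [if_neg h3, if_neg h3, mul_zero]

lemma emb2_mul {i j : Fin r} (hij : i ≠ j) (A B : Matrix (Fin 2) (Fin 2) R) :
    emb2 i j A * emb2 i j B = emb2 i j (A * B) := by
  refine Matrix.ext fun k l => ?_
  rw [emb2_mul_apply hij]
  simp only [emb2, Matrix.of_apply, Matrix.mul_apply, Fin.sum_univ_two]
  split_ifs <;> simp_all <;> try ring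

lemma emb2_one {i j : Fin r} (hij : i ≠ j) : emb2 i j (1 : Matrix (Fin 2) (Fin 2) R) = 1 := by
  refine Matrix.ext fun k l => ?_
  simp only [emb2, Matrix.of_apply, Matrix.one_apply]
  split_ifs <;> simp_all
/-! ### upperN : elementary row/column operations touching row/column 0 -/

def upperN (β : Fin q → R) : Matrix (Fin (q+1)) (Fin (q+1)) R :=
  Matrix.of fun i j => Fin.cases (Fin.cases 0 β j) (fun _ => 0) i

@[simp] lemma upperN_zero_succ (β : Fin q → R) (m : Fin q) : upperN β 0 m.succ = β m := by
  simp [upperN]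
@[simp] lemma upperN_zero_zero (β : Fin q → R) : upperN β 0 0 = 0 := by simp [upperN]
@[simp] lemma upperN_succ (β : Fin q → R) (i : Fin q) (j : Fin (q+1)) :
    upperN β i.succ j = 0 := by simp [upperN]

lemma upperN_add (β γ : Fin q → R) : upperN β + upperN γ = upperN (fun m => β m + γ m) := by
  refine Matrix.ext fun i j => ?_
  show upperN β i j + upperN γ i j = _
  induction i using Fin.cases with
  | zero => induction j using Fin.cases with
    | zero => simp
    | succ j => simp
  | succ i => simp

lemma upperN_zero : upperN (fun _ => (0 : R)) = (0 : Matrix (Fin (q+1)) (Fin (q+1)) R) := by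
  refine Matrix.ext fun i j => ?_
  induction i using Fin.cases with
  | zero => induction j using Fin.cases with
    | zero => simp
    | succ j => simp
  | succ i => simp

lemma upperN_mul_upperN (β γ : Fin q → R) : upperN β * upperN γ = 0 := by
  refine Matrix.ext fun i j => ?_
  rw [Matrix.mul_apply]
  have : ∀ k, upperN β i k * upperN γ k j = 0 := by
    intro k
    induction k using Fin.cases with
    | zero =>
        induction i using Fin.cases with
        | zero => simp
        | succ i => simp
    | succ k => simp
  simp [this]

lemma one_add_upperN_mul (β : Fin q → R) (M : Matrix (Fin (q+1)) (Fin (q+1)) R) :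
    ∀ l, ((1 + upperN β) * M) 0 l = M 0 l + ∑ m, β m * M m.succ l ∧
      ∀ i : Fin q, ((1 + upperN β) * M) i.succ l = M i.succ l := by
  intro l
  constructor
  · rw [Matrix.add_mul, Matrix.one_mul]
    show M 0 l + (upperN β * M) 0 l = _
    congr 1
    rw [Matrix.mul_apply, Fin.sum_univ_succ]
    simp
  · intro i
    rw [Matrix.add_mul, Matrix.one_mul]
    show M i.succ l + (upperN β * M) i.succ l = _
    rw [Matrix.mul_apply]
    simp

lemma mul_one_add_upperN (α : Fin q → R) (M : Matrix (Fin (q+1)) (Fin (q+1)) R) :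
    ∀ k, (M * (1 + upperN α)) k 0 = M k 0 ∧
      ∀ j : Fin q, (M * (1 + upperN α)) k j.succ = M k j.succ + M k 0 * α j := by
  intro k
  constructor
  · rw [Matrix.mul_add, Matrix.mul_one]
    show M k 0 + (M * upperN α) k 0 = _
    rw [Matrix.mul_apply, Fin.sum_univ_succ]
    have : ∀ m : Fin q, M k m.succ * upperN α m.succ 0 = 0 := by intro m; simp
    simp [this]
  · intro j
    rw [Matrix.mul_add, Matrix.mul_one]
    show M k j.succ + (M * upperN α) k j.succ = _
    congr 1
    rw [Matrix.mul_apply, Fin.sum_univ_succ]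
    simp

lemma upperN_polyGauge {β : Fin q → R} (hβ : ∀ m, IsPolyFun (β m)) :
    IsPolyGauge (1 + upperN β) := by
  have hmul : ∀ γ δ : Fin q → R, (1 + upperN γ) * (1 + upperN δ) =
      1 + (upperN γ + upperN δ) := by
    intro γ δ
    rw [Matrix.mul_add, Matrix.mul_one, Matrix.add_mul, Matrix.one_mul,
      upperN_mul_upperN, add_zero, add_assoc]
  have hentry : ∀ (γ : Fin q → R), (∀ m, IsPolyFun (γ m)) →
      ∀ i j, IsPolyFun ((1 + upperN γ) i j) := by
    intro γ hγ i j
    show IsPolyFun ((1 : Matrix (Fin (q+1)) (Fin (q+1)) R) i j + upperN γ i j)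
    apply IsPolyFun.add (isPolyFun_one_entry i j)
    induction i using Fin.cases with
    | zero => induction j using Fin.cases with
      | zero => simpa using IsPolyFun.zero
      | succ j => simpa using hγ j
    | succ i => simpa using IsPolyFun.zero
  refine ⟨hentry β hβ, 1 + upperN (fun m => -(β m)), hentry _ (fun m => (hβ m).neg), ?_, ?_⟩
  · rw [hmul, upperN_add]
    have : (fun m => β m + -(β m)) = fun _ => (0:R) := funext fun m => by ring
    rw [this, upperN_zero, add_zero]
  · rw [hmul, upperN_add]
    have : (fun m => -(β m) + β m) = fun _ => (0:R) := funext fun m => by ring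
    rw [this, upperN_zero, add_zero]

lemma upperN_antiPolyGauge {β : Fin q → R} (hβ : ∀ m, IsAntiPolyFun (β m)) :
    IsAntiPolyGauge (1 + upperN β) := by
  have hmul : ∀ γ δ : Fin q → R, (1 + upperN γ) * (1 + upperN δ) =
      1 + (upperN γ + upperN δ) := by
    intro γ δ
    rw [Matrix.mul_add, Matrix.mul_one, Matrix.add_mul, Matrix.one_mul,
      upperN_mul_upperN, add_zero, add_assoc]
  have hentry : ∀ (γ : Fin q → R), (∀ m, IsAntiPolyFun (γ m)) →
      ∀ i j, IsAntiPolyFun ((1 + upperN γ) i j) := by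
    intro γ hγ i j
    show IsAntiPolyFun ((1 : Matrix (Fin (q+1)) (Fin (q+1)) R) i j + upperN γ i j)
    apply IsAntiPolyFun.add (isAntiPolyFun_one_entry i j)
    induction i using Fin.cases with
    | zero => induction j using Fin.cases with
      | zero => simpa using IsAntiPolyFun.zero
      | succ j => simpa using hγ j
    | succ i => simpa using IsAntiPolyFun.zero
  refine ⟨hentry β hβ, 1 + upperN (fun m => -(β m)), hentry _ (fun m => (hβ m).neg), ?_, ?_⟩
  · rw [hmul, upperN_add]
    have : (fun m => β m + -(β m)) = fun _ => (0:R) := funext fun m => by ring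
    rw [this, upperN_zero, add_zero]
  · rw [hmul, upperN_add]
    have : (fun m => -(β m) + β m) = fun _ => (0:R) := funext fun m => by ring
    rw [this, upperN_zero, add_zero]

/-! ### ext1 : extending a q×q matrix to (q+1)×(q+1) fixing coordinate 0 -/

def ext1 (P : Matrix (Fin q) (Fin q) R) : Matrix (Fin (q+1)) (Fin (q+1)) R :=
  Matrix.of fun i j =>
    Fin.cases (Fin.cases 1 (fun _ => 0) j) (fun i' => Fin.cases 0 (fun j' => P i' j') j) i

@[simp] lemma ext1_zero_zero (P : Matrix (Fin q) (Fin q) R) : ext1 P 0 0 = 1 := by simp [ext1]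
@[simp] lemma ext1_zero_succ (P : Matrix (Fin q) (Fin q) R) (j : Fin q) :
    ext1 P 0 j.succ = 0 := by simp [ext1]
@[simp] lemma ext1_succ_zero (P : Matrix (Fin q) (Fin q) R) (i : Fin q) :
    ext1 P i.succ 0 = 0 := by simp [ext1]
@[simp] lemma ext1_succ_succ (P : Matrix (Fin q) (Fin q) R) (i j : Fin q) :
    ext1 P i.succ j.succ = P i j := by simp [ext1]

lemma ext1_mul_apply_zero (P : Matrix (Fin q) (Fin q) R) (M : Matrix (Fin (q+1)) (Fin (q+1)) R)
    (l : Fin (q+1)) : (ext1 P * M) 0 l = M 0 l := by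
  rw [Matrix.mul_apply, Fin.sum_univ_succ]
  simp

lemma ext1_mul_apply_succ (P : Matrix (Fin q) (Fin q) R) (M : Matrix (Fin (q+1)) (Fin (q+1)) R)
    (i : Fin q) (l : Fin (q+1)) : (ext1 P * M) i.succ l = ∑ m, P i m * M m.succ l := by
  rw [Matrix.mul_apply, Fin.sum_univ_succ]
  simp

lemma mul_ext1_apply_zero (M : Matrix (Fin (q+1)) (Fin (q+1)) R) (Q : Matrix (Fin q) (Fin q) R)
    (k : Fin (q+1)) : (M * ext1 Q) k 0 = M k 0 := by
  rw [Matrix.mul_apply, Fin.sum_univ_succ]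
  simp

lemma mul_ext1_apply_succ (M : Matrix (Fin (q+1)) (Fin (q+1)) R) (Q : Matrix (Fin q) (Fin q) R)
    (k : Fin (q+1)) (j : Fin q) : (M * ext1 Q) k j.succ = ∑ m, M k m.succ * Q m j := by
  rw [Matrix.mul_apply, Fin.sum_univ_succ]
  simp

lemma ext1_mul (P Q : Matrix (Fin q) (Fin q) R) : ext1 P * ext1 Q = ext1 (P * Q) := by
  refine Matrix.ext fun i j => ?_
  induction i using Fin.cases with
  | zero =>
      rw [ext1_mul_apply_zero]
      induction j using Fin.cases with
      | zero => simp
      | succ j => simp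
  | succ i =>
      rw [ext1_mul_apply_succ]
      induction j using Fin.cases with
      | zero => simp
      | succ j => rw [ext1_succ_succ, Matrix.mul_apply]; simp
 
lemma ext1_one : ext1 (1 : Matrix (Fin q) (Fin q) R) = 1 := by
  refine Matrix.ext fun i j => ?_
  induction i using Fin.cases with
  | zero =>
      induction j using Fin.cases with
      | zero => simp
      | succ j => simp [Matrix.one_apply, (Fin.succ_ne_zero j).symm]
  | succ i =>
      induction j using Fin.cases with
      | zero => simp [Matrix.one_apply, Fin.succ_ne_zero i]
      | succ j => simp [Matrix.one_apply, Fin.succ_inj]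

lemma ext1_polyGauge {P : Matrix (Fin q) (Fin q) R} (hP : IsPolyGauge P) :
    IsPolyGauge (ext1 P) := by
  obtain ⟨hPe, P', hP'e, h1, h2⟩ := hP
  have hentry : ∀ (X : Matrix (Fin q) (Fin q) R), (∀ i j, IsPolyFun (X i j)) →
      ∀ i j, IsPolyFun (ext1 X i j) := by
    intro X hX i j
    induction i using Fin.cases with
    | zero => induction j using Fin.cases with
      | zero => simpa using IsPolyFun.one
      | succ j => simpa using IsPolyFun.zero
    | succ i => induction j using Fin.cases with
      | zero => simpa using IsPolyFun.zero
      | succ j => simpa using hX i j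
  exact ⟨hentry P hPe, ext1 P', hentry P' hP'e,
    by rw [ext1_mul, h1, ext1_one], by rw [ext1_mul, h2, ext1_one]⟩

lemma ext1_antiPolyGauge {P : Matrix (Fin q) (Fin q) R} (hP : IsAntiPolyGauge P) :
    IsAntiPolyGauge (ext1 P) := by
  obtain ⟨hPe, P', hP'e, h1, h2⟩ := hP
  have hentry : ∀ (X : Matrix (Fin q) (Fin q) R), (∀ i j, IsAntiPolyFun (X i j)) →
      ∀ i j, IsAntiPolyFun (ext1 X i j) := by
    intro X hX i j
    induction i using Fin.cases with
    | zero => induction j using Fin.cases with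
      | zero => simpa using IsAntiPolyFun.one
      | succ j => simpa using IsAntiPolyFun.zero
    | succ i => induction j using Fin.cases with
      | zero => simpa using IsAntiPolyFun.zero
      | succ j => simpa using hX i j
  exact ⟨hentry P hPe, ext1 P', hentry P' hP'e,
    by rw [ext1_mul, h1, ext1_one], by rw [ext1_mul, h2, ext1_one]⟩
/-! ### emb2 gauges and explicit 2×2 inverses -/

lemma emb2_polyGauge {i j : Fin r} (hij : i ≠ j) {A A' : Matrix (Fin 2) (Fin 2) R}
    (hA : ∀ a b, IsPolyFun (A a b)) (hA' : ∀ a b, IsPolyFun (A' a b))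
    (h1 : A * A' = 1) (h2 : A' * A = 1) : IsPolyGauge (emb2 i j A) := by
  have hent : ∀ (X : Matrix (Fin 2) (Fin 2) R), (∀ a b, IsPolyFun (X a b)) →
      ∀ k l, IsPolyFun (emb2 i j X k l) := by
    intro X hX k l
    simp only [emb2, Matrix.of_apply]
    split_ifs <;> first | exact hX _ _ | exact IsPolyFun.zero | exact IsPolyFun.one
  exact ⟨hent A hA, emb2 i j A', hent A' hA',
    by rw [emb2_mul hij, h1, emb2_one hij], by rw [emb2_mul hij, h2, emb2_one hij]⟩

lemma emb2_antiPolyGauge {i j : Fin r} (hij : i ≠ j) {A A' : Matrix (Fin 2) (Fin 2) R}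
    (hA : ∀ a b, IsAntiPolyFun (A a b)) (hA' : ∀ a b, IsAntiPolyFun (A' a b))
    (h1 : A * A' = 1) (h2 : A' * A = 1) : IsAntiPolyGauge (emb2 i j A) := by
  have hent : ∀ (X : Matrix (Fin 2) (Fin 2) R), (∀ a b, IsAntiPolyFun (X a b)) →
      ∀ k l, IsAntiPolyFun (emb2 i j X k l) := by
    intro X hX k l
    simp only [emb2, Matrix.of_apply]
    split_ifs <;> first | exact hX _ _ | exact IsAntiPolyFun.zero | exact IsAntiPolyFun.one
  exact ⟨hent A hA, emb2 i j A', hent A' hA',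
    by rw [emb2_mul hij, h1, emb2_one hij], by rw [emb2_mul hij, h2, emb2_one hij]⟩

/-- explicit inverse for a 2×2 matrix of determinant 1 -/
def inv2 (A : Matrix (Fin 2) (Fin 2) R) : Matrix (Fin 2) (Fin 2) R :=
  Matrix.of fun a b =>
    if a = 0 then (if b = 0 then A 1 1 else -(A 0 1))
    else (if b = 0 then -(A 1 0) else A 0 0)

lemma inv2_spec (A : Matrix (Fin 2) (Fin 2) R)
    (h : A 0 0 * A 1 1 - A 0 1 * A 1 0 = 1) :
    A * inv2 A = 1 ∧ inv2 A * A = 1 := by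
  constructor <;>
    refine Matrix.ext fun a b => ?_ <;>
    fin_cases a <;> fin_cases b <;>
    simp [Matrix.mul_apply, Fin.sum_univ_two, inv2, Matrix.one_apply] <;>
    first | ring1 | linear_combination h | linear_combination -h

lemma inv2_entries_poly {A : Matrix (Fin 2) (Fin 2) R} (hA : ∀ a b, IsPolyFun (A a b)) :
    ∀ a b, IsPolyFun (inv2 A a b) := by
  intro a b
  simp only [inv2, Matrix.of_apply]
  split_ifs <;> first | exact hA _ _ | exact (hA _ _).neg

lemma inv2_entries_anti {A : Matrix (Fin 2) (Fin 2) R} (hA : ∀ a b, IsAntiPolyFun (A a b)) :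
    ∀ a b, IsAntiPolyFun (inv2 A a b) := by
  intro a b
  simp only [inv2, Matrix.of_apply]
  split_ifs <;> first | exact hA _ _ | exact (hA _ _).neg

/-! ### transfer between `ℂ[X]` and Laurent polynomials -/

lemma isPolyFun_toLaurent (p : Polynomial ℂ) : IsPolyFun (p.toLaurent) := by
  induction p using Polynomial.induction_on' with
  | add p q hp hq => rw [_root_.map_add]; exact hp.add hq
  | monomial n a =>
      rw [← Polynomial.C_mul_X_pow_eq_monomial, Polynomial.toLaurent_C_mul_X_pow]
      exact (IsPolyFun.C a).mul (IsPolyFun.T (by positivity))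

lemma exists_toLaurent {f : R} (hf : IsPolyFun f) : ∃ p : Polynomial ℂ, p.toLaurent = f := by
  classical
  refine ⟨∑ i ∈ f.coeff.support, Polynomial.C (f.coeff i) * Polynomial.X ^ (i.toNat), ?_⟩
  rw [_root_.map_sum]
  have : ∀ i ∈ f.coeff.support, ((Polynomial.C (f.coeff i) * Polynomial.X ^ (i.toNat)).toLaurent : R)
      = AddMonoidAlgebra.single i (f.coeff i) := by
    intro i hi
    rw [Polynomial.toLaurent_C_mul_X_pow, single_eq_C_mul_T]
    have h0 : 0 ≤ i := by
      by_contra hneg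
      exact (Finsupp.mem_support_iff.1 hi) (hf i (by omega))
    rw [Int.toNat_of_nonneg h0]
  rw [Finset.sum_congr rfl this]
  exact f.sum_coeff_single

/-- if the Laurent coefficient of `toLaurent p` at 0 is nonzero then `X ∤ p`. -/
lemma not_X_dvd_of_coeff {p : Polynomial ℂ} (h : (p.toLaurent : R).coeff 0 ≠ 0) :
    ¬ (Polynomial.X ∣ p) := by
  rintro ⟨c, rfl⟩
  apply h
  rw [_root_.map_mul, Polynomial.toLaurent_X]
  rw [coeff_T_mul]
  exact isPolyFun_toLaurent c _ (by norm_num)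

lemma bezout_T {u : R} (hu : IsPolyFun u) (h0 : u.coeff 0 ≠ 0) (e : ℕ) :
    ∃ x y : R, IsPolyFun x ∧ IsPolyFun y ∧ x * u + y * T (e:ℤ) = 1 := by
  obtain ⟨p, rfl⟩ := exists_toLaurent hu
  have hX : ¬ (Polynomial.X ∣ p) := not_X_dvd_of_coeff h0
  have hcop : IsCoprime (Polynomial.X ^ e) p :=
    IsCoprime.pow_left ((Polynomial.irreducible_X.coprime_iff_not_dvd).2 hX)
  obtain ⟨a, b, hab⟩ := hcop
  refine ⟨(b : Polynomial ℂ).toLaurent, (a : Polynomial ℂ).toLaurent,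
    isPolyFun_toLaurent b, isPolyFun_toLaurent a, ?_⟩
  have := congrArg (Polynomial.toLaurent (R := ℂ)) hab
  rw [_root_.map_add, _root_.map_mul, _root_.map_mul, _root_.map_one, Polynomial.toLaurent_X_pow] at this
  linear_combination this

/-- Bézout data for a pair of "polynomial" Laurent functions. -/
lemma gcd_pair {f g : R} (hf : IsPolyFun f) (hg : IsPolyFun g) (hne : g ≠ 0) :
    ∃ x y c1 c2 d : R, IsPolyFun x ∧ IsPolyFun y ∧ IsPolyFun c1 ∧ IsPolyFun c2 ∧ IsPolyFun d ∧
      x * f + y * g = d ∧ c1 * d = f ∧ c2 * d = g ∧ x * c1 + y * c2 = 1 := by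
  classical
  obtain ⟨p, rfl⟩ := exists_toLaurent hf
  obtain ⟨s, rfl⟩ := exists_toLaurent hg
  have hs : s ≠ 0 := fun h => hne (by rw [h, _root_.map_zero])
  set d₀ := EuclideanDomain.gcd p s with hd₀
  have hdne : d₀ ≠ 0 := fun h => hs (by
    have := EuclideanDomain.gcd_eq_zero_iff.1 (hd₀ ▸ h)
    exact this.2)
  obtain ⟨c1₀, hc1⟩ : d₀ ∣ p := EuclideanDomain.gcd_dvd_left p s
  obtain ⟨c2₀, hc2⟩ : d₀ ∣ s := EuclideanDomain.gcd_dvd_right p s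
  have hab : d₀ = p * EuclideanDomain.gcdA p s + s * EuclideanDomain.gcdB p s :=
    EuclideanDomain.gcd_eq_gcd_ab p s
  have hcomb : (EuclideanDomain.gcdA p s * c1₀ + EuclideanDomain.gcdB p s * c2₀) * d₀ = 1 * d₀ := by
    calc (EuclideanDomain.gcdA p s * c1₀ + EuclideanDomain.gcdB p s * c2₀) * d₀
        = p * EuclideanDomain.gcdA p s + s * EuclideanDomain.gcdB p s := by
          rw [hc1, hc2] at *
          ring
    _ = 1 * d₀ := by rw [← hab, one_mul]
  have hunit : EuclideanDomain.gcdA p s * c1₀ + EuclideanDomain.gcdB p s * c2₀ = 1 :=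
    mul_right_cancel₀ hdne hcomb
  refine ⟨(EuclideanDomain.gcdA p s).toLaurent, (EuclideanDomain.gcdB p s).toLaurent,
    c1₀.toLaurent, c2₀.toLaurent, d₀.toLaurent,
    isPolyFun_toLaurent _, isPolyFun_toLaurent _, isPolyFun_toLaurent _, isPolyFun_toLaurent _,
    isPolyFun_toLaurent _, ?_, ?_, ?_, ?_⟩
  · have := congrArg (Polynomial.toLaurent (R := ℂ)) hab
    rw [_root_.map_add, _root_.map_mul, _root_.map_mul] at this
    linear_combination -this
  · have := congrArg (Polynomial.toLaurent (R := ℂ)) hc1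
    rw [_root_.map_mul] at this
    linear_combination -this
  · have := congrArg (Polynomial.toLaurent (R := ℂ)) hc2
    rw [_root_.map_mul] at this
    linear_combination -this
  · have := congrArg (Polynomial.toLaurent (R := ℂ)) hunit
    rw [_root_.map_add, _root_.map_mul, _root_.map_mul, _root_.map_one] at this
    linear_combination this

/-- a unit of `ℂ[T;T⁻¹]` with only nonnegative powers is `C c * T k`. -/
lemma unit_poly_eq_C_mul_T {d : R} (hd : IsPolyFun d) (hu : IsUnit d) :
    ∃ (c : ℂ) (k : ℕ), c ≠ 0 ∧ d = LaurentPolynomial.C c * T (k:ℤ) := by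
  obtain ⟨v, hv⟩ := isUnit_iff_exists_inv.1 hu
  obtain ⟨n, v', hv'⟩ := exists_T_pow v
  obtain ⟨p, hp⟩ := exists_toLaurent hd
  have hXn : p * v' = Polynomial.X ^ n := by
    apply Polynomial.toLaurent_injective
    rw [_root_.map_mul, Polynomial.toLaurent_X_pow, hp, hv']
    calc d * (v * T (n:ℤ)) = d * v * T (n:ℤ) := by ring
    _ = T (n:ℤ) := by rw [hv, one_mul]
  have hdvd : p ∣ Polynomial.X ^ n := ⟨v', hXn.symm⟩
  obtain ⟨i, hin, hassoc⟩ := (dvd_prime_pow Polynomial.prime_X n).1 hdvd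
  obtain ⟨w, hw⟩ := hassoc.symm
  obtain ⟨c, hcu, hcw⟩ := Polynomial.isUnit_iff.1 w.isUnit
  refine ⟨c, i, ?_, ?_⟩
  · exact IsUnit.ne_zero (by simpa using hcu)
  · rw [← hp, ← hw, ← hcw, _root_.map_mul, Polynomial.toLaurent_X_pow, Polynomial.toLaurent_C]
    ring
/-! ### support-splitting utilities -/

lemma T_mul_T_mul (n : ℤ) (f : R) : (T n : R) * ((T (-n) : R) * f) = f := by
  rw [← mul_assoc, ← T_add]
  simp

lemma split_three (f : R) (a b : ℤ) :
    ∃ α γ β : R, IsAntiPolyFun α ∧ IsPolyFun β ∧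
      (∀ i, γ.coeff i ≠ 0 → a < i ∧ i < b) ∧ f = T a * α + γ + T b * β := by
  classical
  set low : R := AddMonoidAlgebra.ofCoeff (Finsupp.filter (fun i => i ≤ a) f.coeff) with hlow
  set mid : R := AddMonoidAlgebra.ofCoeff (Finsupp.filter (fun i => a < i ∧ i < b) f.coeff) with hmid
  set high : R := AddMonoidAlgebra.ofCoeff (Finsupp.filter (fun i => b ≤ i ∧ ¬ i ≤ a) f.coeff) with hhigh
  have hsplit : f = low + mid + high := by
    ext i
    show f.coeff i = low.coeff i + mid.coeff i + high.coeff i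
    rw [hlow, hmid, hhigh, AddMonoidAlgebra.coeff_ofCoeff, AddMonoidAlgebra.coeff_ofCoeff,
      AddMonoidAlgebra.coeff_ofCoeff, Finsupp.filter_apply, Finsupp.filter_apply, Finsupp.filter_apply]
    split_ifs <;> first | omega | simp | (simp; omega)
  refine ⟨(T (-a) : R) * low, mid, (T (-b) : R) * high, ?_, ?_, ?_, ?_⟩
  · intro i hi
    rw [coeff_T_mul] at *
    by_contra h
    have : i - -a ≤ a := by
      by_contra h2
      exact h (by rw [hlow, AddMonoidAlgebra.coeff_ofCoeff, Finsupp.filter_apply, if_neg (by omega)])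
    omega
  · intro i hi
    rw [coeff_T_mul]
    have : ¬ (b ≤ i - -b ∧ ¬ i - -b ≤ a) := by omega
    rw [hhigh, AddMonoidAlgebra.coeff_ofCoeff, Finsupp.filter_apply, if_neg this]
  · intro i hi
    rw [hmid, AddMonoidAlgebra.coeff_ofCoeff, Finsupp.filter_apply] at hi
    by_contra h
    rw [if_neg (by omega)] at hi
    exact hi rfl
  · rw [T_mul_T_mul, T_mul_T_mul]
    exact hsplit

lemma exists_pivot {γ : Fin q → R} (hne : ∃ m, γ m ≠ 0) :
    ∃ (j : ℤ) (m₀ : Fin q), (γ m₀).coeff j ≠ 0 ∧ (∀ m i, (γ m).coeff i ≠ 0 → j ≤ i) := by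
  classical
  set S : Finset ℤ := Finset.univ.biUnion (fun m => (γ m).coeff.support) with hS
  have hSne : S.Nonempty := by
    obtain ⟨m, hm⟩ := hne
    obtain ⟨i, hi⟩ := Finsupp.support_nonempty_iff.2 (fun (h : (γ m).coeff = 0) => hm (LaurentPolynomial.ext fun k => by simp [h]))
    exact ⟨i, Finset.mem_biUnion.2 ⟨m, Finset.mem_univ m, hi⟩⟩
  obtain ⟨m₀, _, hm₀⟩ := Finset.mem_biUnion.1 (S.min'_mem hSne)
  refine ⟨S.min' hSne, m₀, Finsupp.mem_support_iff.1 hm₀, ?_⟩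
  intro m i hi
  exact S.min'_le i (Finset.mem_biUnion.2 ⟨m, Finset.mem_univ m, Finsupp.mem_support_iff.2 hi⟩)

lemma exists_ord_bound (M : Matrix (Fin r) (Fin r) R) :
    ∃ N : ℤ, ∀ i j, OrdGE (M i j) N := by
  classical
  set S : Finset ℤ :=
    Finset.univ.biUnion (fun i : Fin r => Finset.univ.biUnion fun j => (M i j).coeff.support) with hS
  by_cases h : S.Nonempty
  · refine ⟨S.min' h, fun i j k hk => S.min'_le k ?_⟩
    exact Finset.mem_biUnion.2 ⟨i, Finset.mem_univ i,
      Finset.mem_biUnion.2 ⟨j, Finset.mem_univ j, Finsupp.mem_support_iff.2 hk⟩⟩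
  · refine ⟨0, fun i j k hk => absurd ⟨k, ?_⟩ h⟩
    exact Finset.mem_biUnion.2 ⟨i, Finset.mem_univ i,
      Finset.mem_biUnion.2 ⟨j, Finset.mem_univ j, Finsupp.mem_support_iff.2 hk⟩⟩

lemma exists_deg_bound (M : Matrix (Fin r) (Fin r) R) :
    ∃ Δ : ℤ, ∀ i j, DegLE (M i j) Δ := by
  classical
  set S : Finset ℤ :=
    Finset.univ.biUnion (fun i : Fin r => Finset.univ.biUnion fun j => (M i j).coeff.support) with hS
  by_cases h : S.Nonempty
  · refine ⟨S.max' h, fun i j k hk => S.le_max' k ?_⟩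
    exact Finset.mem_biUnion.2 ⟨i, Finset.mem_univ i,
      Finset.mem_biUnion.2 ⟨j, Finset.mem_univ j, Finsupp.mem_support_iff.2 hk⟩⟩
  · refine ⟨0, fun i j k hk => absurd ⟨k, ?_⟩ h⟩
    exact Finset.mem_biUnion.2 ⟨i, Finset.mem_univ i,
      Finset.mem_biUnion.2 ⟨j, Finset.mem_univ j, Finsupp.mem_support_iff.2 hk⟩⟩

/-! ### determinant of a matrix whose 0-column is concentrated at 0 -/

lemma det_shape {q : ℕ} (M : Matrix (Fin (q+1)) (Fin (q+1)) R)
    (h0 : ∀ m : Fin q, M m.succ 0 = 0) :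
    M.det = M 0 0 * (M.submatrix Fin.succ Fin.succ).det := by
  rw [Matrix.det_succ_column_zero, Fin.sum_univ_succ]
  have hzero : ∀ m : Fin q, ((-1 : R) ^ ((m.succ : Fin (q+1)) : ℕ) * M m.succ 0 *
      (M.submatrix (Fin.succAbove m.succ) Fin.succ).det) = 0 := by
    intro m
    rw [h0 m, mul_zero, zero_mul]
  rw [Finset.sum_congr rfl (fun m _ => hzero m), Finset.sum_const_zero, add_zero,
    Fin.succAbove_zero]
  simp

/-! ### a matrix of the final shape is diagonal -/

lemma shape_diag {q : ℕ} {M : Matrix (Fin (q+1)) (Fin (q+1)) R} {a : ℤ} {b : Fin q → ℤ}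
    (h00 : M 0 0 = T a) (hcol : ∀ m : Fin q, M m.succ 0 = 0)
    (hrow : ∀ m : Fin q, M 0 m.succ = 0)
    (hB : ∀ m m', M m.succ m'.succ = Matrix.diagonal (fun m => (T (b m) : R)) m m') :
    M = Matrix.diagonal (fun i => (T ((Fin.cons a b : Fin (q+1) → ℤ) i) : R)) := by
  refine Matrix.ext fun i j => ?_
  induction i using Fin.cases with
  | zero => induction j using Fin.cases with
    | zero => rw [h00, Matrix.diagonal_apply_eq]; rw [Fin.cons_zero]
    | succ j => rw [hrow, Matrix.diagonal_apply_ne _ (by exact (Fin.succ_ne_zero j).symm)]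
  | succ i => induction j using Fin.cases with
    | zero => rw [hcol, Matrix.diagonal_apply_ne _ (by exact Fin.succ_ne_zero i)]
    | succ j =>
        rw [hB]
        by_cases h : i = j
        · subst h; rw [Matrix.diagonal_apply_eq, Matrix.diagonal_apply_eq, Fin.cons_succ]
        · rw [Matrix.diagonal_apply_ne _ h,
            Matrix.diagonal_apply_ne _ (by simpa [Fin.succ_inj] using h)]

/-! ### the semantic bound : any monomial pivot exponent is bounded by the degrees of M₀ -/

lemma coeff_finset_sum {ι : Type*} (s : Finset ι) (f : ι → R) (k : ℤ) :
    (∑ i ∈ s, f i).coeff k = ∑ i ∈ s, (f i).coeff k := by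
  classical
  induction s using Finset.induction_on with
  | empty => simp [_root_.coeff_zero]
  | insert _ _ hx ih => rw [Finset.sum_insert hx, Finset.sum_insert hx, coeff_add, ih]

lemma exponent_le_bound {q : ℕ} {M₀ M : Matrix (Fin (q+1)) (Fin (q+1)) R} {Δ a : ℤ}
    (hdeg : ∀ i j, DegLE (M₀ i j) Δ) (hdet : IsUnit M₀.det)
    (heq : BundleEquiv M₀ M) (h00 : M 0 0 = T a)
    (hcol : ∀ m : Fin q, M m.succ 0 = 0) :
    a ≤ Δ := by
  classical
  obtain ⟨P, Q, ⟨hPe, P', hP'e, hPP', hP'P⟩, ⟨hQe, Q', hQ'e, hQQ', hQ'Q⟩, hMeq⟩ := heq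
  set v : Fin (q+1) → R := fun k => Q k 0 with hv
  set w : Fin (q+1) → R := fun i => P' i 0 with hw
  -- the key identity : ∑ k M₀ i k * v k = T a * w i
  have hkey : ∀ i, ∑ k, M₀ i k * v k = T a * w i := by
    intro i
    have h1 : P' * M = M₀ * Q := by
      rw [hMeq, ← Matrix.mul_assoc, ← Matrix.mul_assoc, hP'P, Matrix.one_mul]
    have h2 : (P' * M) i 0 = (M₀ * Q) i 0 := by rw [h1]
    rw [Matrix.mul_apply, Matrix.mul_apply] at h2
    have h3 : ∑ k, P' i k * M k 0 = P' i 0 * T a := by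
      rw [Fin.sum_univ_succ, h00]
      have : ∀ m : Fin q, P' i m.succ * M m.succ 0 = 0 := fun m => by
        rw [hcol, mul_zero]
      rw [Finset.sum_congr rfl fun m _ => this m, Finset.sum_const_zero, add_zero]
    rw [h3] at h2
    rw [← h2, hw]
    ring
  -- v ≠ 0
  have hvne : ¬ (∀ k, v k = 0) := by
    intro hz
    have h1 : (Q' * Q) 0 0 = 1 := by rw [hQ'Q]; simp
    rw [Matrix.mul_apply] at h1
    have : ∀ k, Q' 0 k * Q k 0 = 0 := fun k => by rw [show Q k 0 = 0 from hz k, mul_zero]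
    rw [Finset.sum_congr rfl fun k _ => this k, Finset.sum_const_zero] at h1
    exact one_ne_zero h1.symm
  -- some component of M₀ ⬝ v is nonzero
  have hMvne : ∃ i, (∑ k, M₀ i k * v k) ≠ 0 := by
    by_contra hz
    push_neg at hz
    apply hvne
    intro l
    have hadj : ∀ l, M₀.det * v l = ∑ i, M₀.adjugate l i * (∑ k, M₀ i k * v k) := by
      intro l
      have swap : ∑ i, M₀.adjugate l i * (∑ k, M₀ i k * v k)
          = ∑ k, (∑ i, M₀.adjugate l i * M₀ i k) * v k := by
        rw [Finset.sum_congr rfl fun i _ => Finset.mul_sum Finset.univ _ _,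
          Finset.sum_comm]
        refine Finset.sum_congr rfl fun k _ => ?_
        rw [Finset.sum_mul]
        refine Finset.sum_congr rfl fun i _ => by ring
      rw [swap]
      have : ∀ k, (∑ i, M₀.adjugate l i * M₀ i k) = (M₀.adjugate * M₀) l k := fun k =>
        (Matrix.mul_apply).symm
      rw [Finset.sum_congr rfl fun k _ => by rw [this k]]
      rw [Matrix.adjugate_mul]
      have : ∀ k, (M₀.det • (1 : Matrix (Fin (q+1)) (Fin (q+1)) R)) l k * v k
          = if l = k then M₀.det * v k else 0 := by
        intro k
        rw [Matrix.smul_apply, Matrix.one_apply]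
        split_ifs <;> simp
      rw [Finset.sum_congr rfl fun k _ => this k, Finset.sum_ite_eq Finset.univ]
      simp
    have hdet0 : M₀.det * v l = 0 := by
      rw [hadj l, Finset.sum_congr rfl fun i _ => by rw [hz i, mul_zero],
        Finset.sum_const_zero]
    rcases mul_eq_zero.1 hdet0 with h | h
    · exact absurd h (IsUnit.ne_zero hdet)
    · exact h
  obtain ⟨i, hi⟩ := hMvne
  obtain ⟨κ, hκ⟩ : ∃ κ, (∑ k, M₀ i k * v k).coeff κ ≠ 0 := by
    by_contra hz
    push_neg at hz
    exact hi (LaurentPolynomial.ext hz)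
  have hκΔ : κ ≤ Δ := by
    rw [coeff_finset_sum] at hκ
    obtain ⟨k, _, hk⟩ := Finset.exists_ne_zero_of_sum_ne_zero hκ
    have : DegLE (M₀ i k * v k) (Δ + 0) :=
      (hdeg i k).mul (isAntiPolyFun_iff.1 (hQe k 0))
    have := this κ hk
    omega
  have hκa : a ≤ κ := by
    rw [hkey i, coeff_T_mul] at hκ
    have := isPolyFun_iff.1 (hP'e i 0) (κ - a)
    by_contra h
    exact hκ (by
      by_contra h2
      have := this h2
      omega)
  omega
/-! ### clearing the 0-column by a polynomial gauge -/

lemma mulVec_sum_assoc {n : ℕ} (P Q : Matrix (Fin n) (Fin n) R) (f : Fin n → R) (l : Fin n) :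
    ∑ k, (P * Q) l k * f k = ∑ m, P l m * (∑ k, Q m k * f k) := by
  have : ∀ k, (P * Q) l k * f k = ∑ m, P l m * (Q m k * f k) := by
    intro k
    rw [Matrix.mul_apply, Finset.sum_mul]
    exact Finset.sum_congr rfl fun m _ => by ring
  rw [Finset.sum_congr rfl fun k _ => this k, Finset.sum_comm]
  exact Finset.sum_congr rfl fun m _ => by rw [Finset.mul_sum]

lemma emb2_row_sum {n : ℕ} {i j : Fin n} (hij : i ≠ j) (A : Matrix (Fin 2) (Fin 2) R)
    (g : Fin n → R) (l : Fin n) (i₀ : Fin n) :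
    ∑ m, emb2 i j A l m * g m =
      if l = i then A 0 0 * g i + A 0 1 * g j
      else if l = j then A 1 0 * g i + A 1 1 * g j
      else g l := by
  have := emb2_mul_apply hij A (Matrix.of fun p _ => g p) l i₀
  rw [Matrix.mul_apply] at this
  exact this

lemma gcd_clear : ∀ (q : ℕ) (f : Fin (q+1) → R), (∀ i, IsPolyFun (f i)) →
    ∃ (P : Matrix (Fin (q+1)) (Fin (q+1)) R) (d : R), IsPolyGauge P ∧ IsPolyFun d ∧
      (∀ l, (∑ k, P l k * f k) = if l = 0 then d else 0) := by
  intro q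
  induction q with
  | zero =>
      intro f hf
      refine ⟨1, f 0, IsPolyGauge.one, hf 0, fun l => ?_⟩
      have hl : l = 0 := Fin.ext (by simpa using Nat.lt_one_iff.1 l.isLt)
      subst hl
      rw [if_pos rfl, Fin.sum_univ_one]
      simp [Matrix.one_apply]
  | succ q ih =>
      intro f hf
      obtain ⟨P', d', hP', hd', hspec⟩ := ih (fun m => f m.succ) (fun m => hf m.succ)
      set g : Fin (q+2) → R := fun l => ∑ k, ext1 P' l k * f k with hg
      have hg0 : g 0 = f 0 := by
        rw [hg]
        simp only []
        rw [Fin.sum_univ_succ, ext1_zero_zero, one_mul]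
        have : ∀ m : Fin (q+1), ext1 P' 0 m.succ * f m.succ = 0 := fun m => by
          rw [ext1_zero_succ, zero_mul]
        rw [Finset.sum_congr rfl fun m _ => this m, Finset.sum_const_zero, add_zero]
      have hgs : ∀ m : Fin (q+1), g m.succ = if m = 0 then d' else 0 := by
        intro m
        rw [hg]
        simp only []
        rw [Fin.sum_univ_succ, ext1_succ_zero, zero_mul, zero_add]
        rw [Finset.sum_congr rfl fun k _ => by rw [ext1_succ_succ]]
        exact hspec m
      by_cases hd0 : d' = 0
      · refine ⟨ext1 P', f 0, ext1_polyGauge hP', hf 0, fun l => ?_⟩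
        have hlg : ∑ k, ext1 P' l k * f k = g l := by rw [hg]
        rw [hlg]
        induction l using Fin.cases with
        | zero => rw [if_pos rfl, hg0]
        | succ m =>
            rw [if_neg (Fin.succ_ne_zero m), hgs m, hd0]
            simp
      · obtain ⟨x, y, c1, c2, d, px, py, pc1, pc2, pd, hxy, hc1, hc2, hu⟩ :=
          gcd_pair (hf 0) hd' hd0
        set A2 : Matrix (Fin 2) (Fin 2) R := Matrix.of fun a b =>
          if a = 0 then (if b = 0 then x else y)
          else (if b = 0 then -c2 else c1) with hA2
        have hA2e : A2 0 0 = x ∧ A2 0 1 = y ∧ A2 1 0 = -c2 ∧ A2 1 1 = c1 := by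
          refine ⟨?_, ?_, ?_, ?_⟩ <;> simp [hA2]
        have hdet : A2 0 0 * A2 1 1 - A2 0 1 * A2 1 0 = 1 := by
          rw [hA2e.1, hA2e.2.1, hA2e.2.2.1, hA2e.2.2.2]
          linear_combination hu
        obtain ⟨hinv1, hinv2⟩ := inv2_spec A2 hdet
        have hne01 : (0 : Fin (q+2)) ≠ Fin.succ 0 := (Fin.succ_ne_zero 0).symm
        have hA2poly : ∀ a b, IsPolyFun (A2 a b) := by
          intro a b
          simp only [hA2, Matrix.of_apply]
          split_ifs <;> first | exact px | exact py | exact pc2.neg | exact pc1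
        have hGgauge : IsPolyGauge (emb2 0 (Fin.succ 0) A2) :=
          emb2_polyGauge hne01 hA2poly (inv2_entries_poly hA2poly) hinv1 hinv2
        refine ⟨emb2 0 (Fin.succ 0) A2 * ext1 P', d, hGgauge.mul (ext1_polyGauge hP'),
          pd, fun l => ?_⟩
        rw [mulVec_sum_assoc]
        have hgl : ∀ p, (∑ k, ext1 P' p k * f k) = g p := fun p => by rw [hg]
        rw [Finset.sum_congr rfl fun m _ => by rw [hgl m]]
        have : ∑ m, emb2 0 (Fin.succ 0) A2 l m * g m =
            if l = 0 then A2 0 0 * g 0 + A2 0 1 * g (Fin.succ 0)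
            else if l = Fin.succ 0 then A2 1 0 * g 0 + A2 1 1 * g (Fin.succ 0)
            else g l := emb2_row_sum hne01 A2 g l 0
        rw [this]
        by_cases hl : l = 0
        · rw [if_pos hl, if_pos hl, hA2e.1, hA2e.2.1, hg0, hgs 0, if_pos rfl]
          exact hxy
        · rw [if_neg hl, if_neg hl]
          by_cases hl2 : l = Fin.succ 0
          · rw [if_pos hl2, hA2e.2.2.1, hA2e.2.2.2, hg0, hgs 0, if_pos rfl]
            linear_combination c2 * hc1 - c1 * hc2
          · rw [if_neg hl2]
            induction l using Fin.cases with
            | zero => exact absurd rfl hl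
            | succ m =>
                rw [hgs m, if_neg (by
                  intro hm
                  exact hl2 (by rw [hm]))]
/-! ### the inductive step of the Birkhoff algorithm -/

lemma step {q : ℕ} (M₀ : Matrix (Fin (q+1)) (Fin (q+1)) R) (Δ : ℤ)
    (hdeg : ∀ i j, DegLE (M₀ i j) Δ) (hdet : IsUnit M₀.det)
    (ihq : ∀ B : Matrix (Fin q) (Fin q) R, IsUnit B.det →
      ∃ b : Fin q → ℤ, BundleEquiv B (Matrix.diagonal fun m => (T (b m) : R)))
    (M : Matrix (Fin (q+1)) (Fin (q+1)) R) (a : ℤ)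
    (h00 : M 0 0 = T a) (hcol : ∀ m : Fin q, M m.succ 0 = 0)
    (heq : BundleEquiv M₀ M) :
    (∃ aa : Fin (q+1) → ℤ, BundleEquiv M₀ (Matrix.diagonal fun i => (T (aa i) : R))) ∨
    (∃ (M' : Matrix (Fin (q+1)) (Fin (q+1)) R) (a' : ℤ),
      M' 0 0 = T a' ∧ (∀ m : Fin q, M' m.succ 0 = 0) ∧ BundleEquiv M₀ M' ∧ a < a' ∧ a' ≤ Δ) := by
  classical
  have hMdet : IsUnit M.det := heq.det_isUnit hdet
  set B : Matrix (Fin q) (Fin q) R := M.submatrix Fin.succ Fin.succ with hB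
  have hdetM : M.det = T a * B.det := by
    rw [det_shape M hcol, h00]
  have hBdet : IsUnit B.det := by
    rw [hdetM] at hMdet
    exact isUnit_of_mul_isUnit_right hMdet
  obtain ⟨b, Pb, Qb, hPb, hQb, hbeq⟩ := ihq B hBdet
  set M1 := ext1 Pb * M * ext1 Qb with hM1
  have heq1 : BundleEquiv M₀ M1 :=
    heq.trans (BundleEquiv.gauge (ext1_polyGauge hPb) (ext1_antiPolyGauge hQb))
  have h100 : M1 0 0 = T a := by
    rw [hM1, mul_ext1_apply_zero, ext1_mul_apply_zero, h00]
  have h1col : ∀ m : Fin q, M1 m.succ 0 = 0 := by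
    intro m
    rw [hM1, mul_ext1_apply_zero, ext1_mul_apply_succ]
    refine Finset.sum_eq_zero fun k _ => ?_
    rw [hcol k, mul_zero]
  have h1B : ∀ m m', M1 m.succ m'.succ = Matrix.diagonal (fun m => (T (b m) : R)) m m' := by
    intro m m'
    rw [hM1, mul_ext1_apply_succ]
    have : ∀ k, (ext1 Pb * M) m.succ k.succ = (Pb * B) m k := by
      intro k
      rw [ext1_mul_apply_succ, Matrix.mul_apply]
      rfl
    rw [Finset.sum_congr rfl fun k _ => by rw [this k]]
    have : ∑ k, (Pb * B) m k * Qb k m' = ((Pb * B) * Qb) m m' := (Matrix.mul_apply).symm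
    rw [this, ← hbeq]
  set c : Fin q → R := fun m => M1 0 m.succ with hc
  choose α γ β hα hβ hγ hsum using fun m => split_three (c m) a (b m)
  set E := (1 : Matrix (Fin (q+1)) (Fin (q+1)) R) + upperN (fun m => -(β m)) with hE
  set F := (1 : Matrix (Fin (q+1)) (Fin (q+1)) R) + upperN (fun m => -(α m)) with hF
  have hEg : IsPolyGauge E := upperN_polyGauge fun m => (hβ m).neg
  have hFg : IsAntiPolyGauge F := upperN_antiPolyGauge fun m => by
    have := (hα m)
    intro i hi
    rw [coeff_neg, neg_eq_zero]
    exact this i hi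
  set M2 := E * M1 * F with hM2
  have heq2 : BundleEquiv M₀ M2 := heq1.trans (BundleEquiv.gauge hEg hFg)
  -- entries of E * M1
  have hEM1_0 : ∀ l, (E * M1) 0 l = M1 0 l + ∑ m, -(β m) * M1 m.succ l := fun l =>
    ((one_add_upperN_mul _ M1 l).1)
  have hEM1_s : ∀ (i : Fin q) l, (E * M1) i.succ l = M1 i.succ l := fun i l =>
    ((one_add_upperN_mul _ M1 l).2 i)
  have h200 : M2 0 0 = T a := by
    rw [hM2, (mul_one_add_upperN _ _ 0).1, hEM1_0]
    rw [h100]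
    have : ∀ m : Fin q, -(β m) * M1 m.succ 0 = 0 := fun m => by rw [h1col m, mul_zero]
    rw [Finset.sum_congr rfl fun m _ => this m, Finset.sum_const_zero, add_zero]
  have h2col : ∀ m : Fin q, M2 m.succ 0 = 0 := by
    intro m
    rw [hM2, (mul_one_add_upperN _ _ m.succ).1, hEM1_s, h1col]
  have h2B : ∀ m m', M2 m.succ m'.succ = Matrix.diagonal (fun m => (T (b m) : R)) m m' := by
    intro m m'
    rw [hM2, (mul_one_add_upperN _ _ m.succ).2 m', hEM1_s, hEM1_s, h1col, zero_mul, add_zero]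
    exact h1B m m'
  have h2row : ∀ m : Fin q, M2 0 m.succ = γ m := by
    intro m
    rw [hM2, (mul_one_add_upperN _ _ 0).2 m, hEM1_0, hEM1_0]
    rw [h100]
    have hsum1 : ∑ m', -(β m') * M1 m'.succ m.succ = -(β m) * T (b m) := by
      have : ∀ m', -(β m') * M1 m'.succ m.succ =
          if m' = m then -(β m') * T (b m') else 0 := by
        intro m'
        rw [h1B, Matrix.diagonal_apply]
        split_ifs with h
        · subst h; rfl
        · rw [mul_zero]
      rw [Finset.sum_congr rfl fun m' _ => this m', Finset.sum_ite_eq' Finset.univ]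
      simp
    have hsum2 : ∑ m', -(β m') * M1 m'.succ 0 = 0 := by
      refine Finset.sum_eq_zero fun m' _ => by rw [h1col, mul_zero]
    rw [hsum1, hsum2, add_zero]
    have hcm : M1 0 m.succ = c m := rfl
    rw [hcm, hsum m]
    ring
  by_cases hγ0 : ∀ m, γ m = 0
  · left
    refine ⟨Fin.cons a b, ?_⟩
    have : M2 = Matrix.diagonal (fun i => (T ((Fin.cons a b : Fin (q+1) → ℤ) i) : R)) :=
      shape_diag h200 h2col (fun m => by rw [h2row, hγ0]) h2B
    rw [← this]
    exact heq2
  · right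
    push_neg at hγ0
    obtain ⟨j, m₀, hj0, hjmin⟩ := exists_pivot hγ0
    have hjrange : a < j ∧ j < b m₀ := hγ m₀ j hj0
    obtain ⟨u, hu⟩ : ∃ u : R, u = (T (-j) : R) * γ m₀ := ⟨_, rfl⟩
    have hupoly : IsPolyFun u := by
      intro i hi
      rw [hu, coeff_T_mul]
      by_contra h
      have := hjmin m₀ _ h
      omega
    have hu0 : u.coeff 0 ≠ 0 := by
      rw [hu, coeff_T_mul]
      simpa using hj0
    have hTju : (T j : R) * u = γ m₀ := by rw [hu]; exact T_mul_T_mul j (γ m₀)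
    set e : ℕ := (b m₀ - j).toNat with he
    have heℤ : (e : ℤ) = b m₀ - j := Int.toNat_of_nonneg (by omega)
    obtain ⟨x, y, px, py, hxy⟩ := bezout_T hupoly hu0 e
    set A2 : Matrix (Fin 2) (Fin 2) R := Matrix.of fun s t =>
      if s = 0 then (if t = 0 then x else y)
      else (if t = 0 then -(T (e:ℤ)) else u) with hA2
    have hA2e : A2 0 0 = x ∧ A2 0 1 = y ∧ A2 1 0 = -(T (e:ℤ)) ∧ A2 1 1 = u := by
      refine ⟨?_, ?_, ?_, ?_⟩ <;> simp [hA2]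
    have hdet2 : A2 0 0 * A2 1 1 - A2 0 1 * A2 1 0 = 1 := by
      rw [hA2e.1, hA2e.2.1, hA2e.2.2.1, hA2e.2.2.2]
      linear_combination hxy
    obtain ⟨hinv1, hinv2⟩ := inv2_spec A2 hdet2
    have hA2poly : ∀ s t, IsPolyFun (A2 s t) := by
      intro s t
      simp only [hA2, Matrix.of_apply]
      split_ifs with h1 h2 h3
      · exact px
      · exact py
      · exact (IsPolyFun.T (by positivity)).neg
      · exact hupoly
    have hne0s : (0 : Fin (q+1)) ≠ m₀.succ := (Fin.succ_ne_zero m₀).symm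
    have hGg : IsPolyGauge (emb2 0 m₀.succ A2) :=
      emb2_polyGauge hne0s hA2poly (inv2_entries_poly hA2poly) hinv1 hinv2
    set Sw : Matrix (Fin 2) (Fin 2) R := Matrix.of fun s t => if s = t then 0 else 1 with hSw
    have hSwmul : Sw * Sw = 1 := by
      refine Matrix.ext fun s t => ?_
      fin_cases s <;> fin_cases t <;>
        simp [hSw, Matrix.mul_apply, Fin.sum_univ_two, Matrix.one_apply]
    have hSwconst : ∀ s t, IsAntiPolyFun (Sw s t) := by
      intro s t
      simp only [hSw, Matrix.of_apply]
      split_ifs <;> first | exact IsAntiPolyFun.zero | exact IsAntiPolyFun.one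
    have hWg : IsAntiPolyGauge (emb2 0 m₀.succ Sw) :=
      emb2_antiPolyGauge hne0s hSwconst hSwconst hSwmul hSwmul
    set M3 := emb2 0 m₀.succ A2 * M2 * emb2 0 m₀.succ Sw with hM3
    have heq3 : BundleEquiv M₀ M3 := heq2.trans (BundleEquiv.gauge hGg hWg)
    -- entries of M2 * Sw-swap
    have hSwe : Sw 0 0 = 0 ∧ Sw 0 1 = 1 ∧ Sw 1 0 = 1 ∧ Sw 1 1 = 0 := by
      refine ⟨?_, ?_, ?_, ?_⟩ <;> simp [hSw]
    set N := M2 * emb2 0 m₀.succ Sw with hN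
    have hN0 : ∀ k, N k 0 = M2 k m₀.succ := by
      intro k
      rw [hN, mul_emb2_apply hne0s, if_pos rfl, hSwe.1, hSwe.2.2.1, mul_zero, zero_add, mul_one]
    have hNs : ∀ k, N k m₀.succ = M2 k 0 := by
      intro k
      rw [hN, mul_emb2_apply hne0s, if_neg (Ne.symm hne0s), if_pos rfl, hSwe.2.1, hSwe.2.2.2,
        mul_zero, add_zero, mul_one]
    have hNelse : ∀ k l, l ≠ 0 → l ≠ m₀.succ → N k l = M2 k l := by
      intro k l h1 h2
      rw [hN, mul_emb2_apply hne0s, if_neg h1, if_neg h2]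
    have hM3eq : M3 = emb2 0 m₀.succ A2 * N := by rw [hM3, hN, Matrix.mul_assoc]
    have h300 : M3 0 0 = T j := by
      rw [hM3eq, emb2_mul_apply hne0s, if_pos rfl, hA2e.1, hA2e.2.1, hN0, hN0,
        h2row, h2B m₀ m₀, Matrix.diagonal_apply_eq]
      have hbm : (T (b m₀) : R) = T j * T (e:ℤ) := by rw [← T_add]; congr 1; omega
      rw [← hTju, hbm]
      linear_combination (T j : R) * hxy
    have h3col : ∀ m : Fin q, M3 m.succ 0 = 0 := by
      intro m
      by_cases hm : m = m₀
      · subst hm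
        rw [hM3eq, emb2_mul_apply hne0s, if_neg (Fin.succ_ne_zero m), if_pos rfl,
          hA2e.2.2.1, hA2e.2.2.2, hN0, hN0, h2row, h2B m m, Matrix.diagonal_apply_eq]
        have hbm : (T (b m) : R) = T j * T (e:ℤ) := by rw [← T_add]; congr 1; omega
        rw [← hTju, hbm]
        ring
      · rw [hM3eq, emb2_mul_apply hne0s, if_neg (Fin.succ_ne_zero m),
          if_neg (by simpa [Fin.succ_inj] using hm), hN0, h2B m m₀,
          Matrix.diagonal_apply_ne _ hm]
    exact ⟨M3, j, h300, h3col, heq3, hjrange.1,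
      exponent_le_bound hdeg hdet heq3 h300 h3col⟩

/-! ### the fuelled loop -/

lemma loop {q : ℕ} (M₀ : Matrix (Fin (q+1)) (Fin (q+1)) R) (Δ : ℤ)
    (hdeg : ∀ i j, DegLE (M₀ i j) Δ) (hdet : IsUnit M₀.det)
    (ihq : ∀ B : Matrix (Fin q) (Fin q) R, IsUnit B.det →
      ∃ b : Fin q → ℤ, BundleEquiv B (Matrix.diagonal fun m => (T (b m) : R))) :
    ∀ (n : ℕ) (M : Matrix (Fin (q+1)) (Fin (q+1)) R) (a : ℤ),
      M 0 0 = T a → (∀ m : Fin q, M m.succ 0 = 0) → BundleEquiv M₀ M →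
      (Δ - a).toNat ≤ n →
      ∃ aa : Fin (q+1) → ℤ, BundleEquiv M₀ (Matrix.diagonal fun i => (T (aa i) : R)) := by
  intro n
  induction n with
  | zero =>
      intro M a h00 hcol heq hfuel
      rcases step M₀ Δ hdeg hdet ihq M a h00 hcol heq with h | ⟨M', a', _, _, _, h4, h5⟩
      · exact h
      · omega
  | succ n ih =>
      intro M a h00 hcol heq hfuel
      rcases step M₀ Δ hdeg hdet ihq M a h00 hcol heq with h | ⟨M', a', h1, h2, h3, h4, h5⟩
      · exact h
      · exact ih M' a' h1 h2 h3 (by omega)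

/-! ### scalar shift of a diagonal -/

lemma T_smul_diagonal (N : ℤ) (aa : Fin r → ℤ) :
    (T N : R) • Matrix.diagonal (fun i => (T (aa i) : R)) =
      Matrix.diagonal (fun i => (T (aa i + N) : R)) := by
  refine Matrix.ext fun i j => ?_
  rw [Matrix.smul_apply, smul_eq_mul]
  by_cases h : i = j
  · subst h; rw [Matrix.diagonal_apply_eq, Matrix.diagonal_apply_eq, ← T_add]
    congr 1; omega
  · rw [Matrix.diagonal_apply_ne _ h, Matrix.diagonal_apply_ne _ h, mul_zero]

/-! ### existence -/

lemma main_exists : ∀ (r : ℕ) (M : Matrix (Fin r) (Fin r) R), IsUnit M.det →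
    ∃ a : Fin r → ℤ, BundleEquiv M (Matrix.diagonal fun i => (T (a i) : R)) := by
  intro r
  induction r with
  | zero =>
      intro M _
      refine ⟨Fin.elim0, 1, 1, IsPolyGauge.one, IsAntiPolyGauge.one, ?_⟩
      refine Matrix.ext fun i _ => i.elim0
  | succ q ih =>
      intro M hdet
      obtain ⟨N₀, hN₀⟩ := exists_ord_bound M
      set N : ℤ := max (-N₀) 0 with hNdef
      set M' := (T N : R) • M with hM'
      have hM'e : ∀ i j, IsPolyFun (M' i j) := by
        intro i j k hk
        rw [hM', Matrix.smul_apply, smul_eq_mul, coeff_T_mul]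
        by_contra h
        have := hN₀ i j (k - N) h
        omega
      have hM'det : IsUnit M'.det := by
        rw [hM', Matrix.det_smul]
        exact ((isUnit_T N).pow _).mul hdet
      obtain ⟨P, d, hPg, hdp, hPspec⟩ := gcd_clear q (fun i => M' i 0) (fun i => hM'e i 0)
      set M1 := P * M' with hM1
      have hM1col : ∀ l, M1 l 0 = if l = 0 then d else 0 := by
        intro l
        rw [hM1, Matrix.mul_apply]
        exact hPspec l
      have hM1det : IsUnit M1.det := by
        rw [hM1, Matrix.det_mul]
        obtain ⟨_, P', _, hPP', _⟩ := hPg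
        exact (IsUnit.of_mul_eq_one P'.det (by rw [← Matrix.det_mul, hPP',
          Matrix.det_one])).mul hM'det
      have hdunit : IsUnit d := by
        have := det_shape M1 (fun m => by rw [hM1col m.succ, if_neg (Fin.succ_ne_zero m)])
        rw [hM1col 0, if_pos rfl] at this
        rw [this] at hM1det
        exact isUnit_of_mul_isUnit_left hM1det
      obtain ⟨cc, k, hcc, hdeq⟩ := unit_poly_eq_C_mul_T hdp hdunit
      set v : Fin (q+1) → ℂ := Function.update (fun _ => 1) 0 cc⁻¹ with hv
      have hvne : ∀ i, v i ≠ 0 := by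
        intro i
        rw [hv]
        by_cases h : i = 0
        · subst h; rw [Function.update_self]; exact inv_ne_zero hcc
        · rw [Function.update_of_ne h]; exact one_ne_zero
      set S := Matrix.diagonal (fun i => (LaurentPolynomial.C (v i) : R)) with hS
      have hSg : IsPolyGauge S := constDiag_polyGauge v hvne
      set M2 := S * M1 with hM2
      have hM2e : ∀ i j, M2 i j = LaurentPolynomial.C (v i) * M1 i j := by
        intro i j
        rw [hM2, hS, Matrix.diagonal_mul]
      have h200 : M2 0 0 = T (k : ℤ) := by
        rw [hM2e, hM1col 0, if_pos rfl, hdeq, hv, Function.update_self, ← mul_assoc,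
          ← _root_.map_mul, inv_mul_cancel₀ hcc, _root_.map_one, one_mul]
      have h2col : ∀ m : Fin q, M2 m.succ 0 = 0 := by
        intro m
        rw [hM2e, hM1col m.succ, if_neg (Fin.succ_ne_zero m), mul_zero]
      have heq2 : BundleEquiv M' M2 := by
        have : M2 = (S * P) * M' * 1 := by rw [Matrix.mul_one, hM2, hM1, Matrix.mul_assoc]
        rw [this]
        exact BundleEquiv.gauge (hSg.mul hPg) IsAntiPolyGauge.one
      obtain ⟨Δ, hΔ⟩ := exists_deg_bound M'
      obtain ⟨aa, haa⟩ := loop M' Δ hΔ hM'det ih ((Δ - k).toNat) M2 k h200 h2col heq2 le_rfl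
      have hfin := BundleEquiv.unshift N (by rw [← hM']; exact haa)
      rw [T_smul_diagonal] at hfin
      exact ⟨fun i => aa i + -N, hfin⟩
/-! ### uniqueness -/

lemma diag_equiv_count {r : ℕ} {a b : Fin r → ℤ}
    (h : BundleEquiv (Matrix.diagonal fun i => (T (a i) : R))
      (Matrix.diagonal fun i => (T (b i) : R))) :
    ∀ c : ℤ, (Finset.univ.filter fun j => c ≤ a j).card ≤
      (Finset.univ.filter fun i => c ≤ b i).card := by
  classical
  obtain ⟨P, Q, ⟨hPe, P', hP'e, hPP', hP'P⟩, ⟨hQe, Q', hQ'e, hQQ', hQ'Q⟩, heq⟩ := h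
  have hmain : Matrix.diagonal (fun i => (T (b i) : R)) * Q' =
      P * Matrix.diagonal (fun i => (T (a i) : R)) := by
    rw [heq, Matrix.mul_assoc, Matrix.mul_assoc, hQQ', Matrix.mul_one]
  have hkey : ∀ i j, P i j ≠ 0 → a j ≤ b i := by
    intro i j hPij
    obtain ⟨κ, hκ⟩ : ∃ κ, (P i j).coeff κ ≠ 0 := by
      by_contra hz
      push_neg at hz
      exact hPij (LaurentPolynomial.ext hz)
    have hκ0 : 0 ≤ κ := by
      by_contra hneg
      exact hκ (hPe i j κ (by omega))
    have hentry : (T (b i) : R) * Q' i j = P i j * T (a j) := by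
      have := congrArg (fun X : Matrix (Fin r) (Fin r) R => X i j) hmain
      simpa [Matrix.diagonal_mul, Matrix.mul_diagonal] using this
    have hco : (P i j * T (a j) : R).coeff (κ + a j) ≠ 0 := by
      rw [coeff_mul_T]
      simpa using hκ
    rw [← hentry, coeff_T_mul] at hco
    have := hQ'e i j
    by_contra hab
    exact hco (this _ (by omega))
  intro c
  set J := Finset.univ.filter fun j => c ≤ a j with hJ
  set I := Finset.univ.filter fun i => c ≤ b i with hI
  set X : Matrix {i // i ∈ I} {j // j ∈ J} R := fun i j => P i.1 j.1 with hX
  set Y : Matrix {j // j ∈ J} {i // i ∈ I} R := fun j i => P' j.1 i.1 with hY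
  have hYX : Y * X = 1 := by
    refine Matrix.ext fun j j' => ?_
    rw [Matrix.mul_apply]
    have hsub : ∑ i : {i // i ∈ I}, Y j i * X i j' = ∑ i ∈ I, P' j.1 i * P i j'.1 := by
      rw [← Finset.sum_coe_sort I (fun i => P' j.1 i * P i j'.1)]
    rw [hsub]
    have hfull : ∑ i ∈ I, P' j.1 i * P i j'.1 = ∑ i, P' j.1 i * P i j'.1 := by
      refine Finset.sum_subset (Finset.subset_univ I) ?_
      intro i _ hiI
      have hP0 : P i j'.1 = 0 := by
        by_contra hne
        have h1 := hkey i j'.1 hne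
        have h2 : c ≤ a j'.1 := (Finset.mem_filter.1 j'.2).2
        exact hiI (by rw [hI]; exact Finset.mem_filter.2 ⟨Finset.mem_univ i, by omega⟩)
      rw [hP0, mul_zero]
    rw [hfull]
    have : ∑ i, P' j.1 i * P i j'.1 = (P' * P) j.1 j'.1 := (Matrix.mul_apply).symm
    rw [this, hP'P, Matrix.one_apply, Matrix.one_apply]
    by_cases hjj : j = j'
    · rw [if_pos hjj, if_pos (by rw [hjj])]
    · rw [if_neg hjj, if_neg (fun hc2 => hjj (Subtype.ext hc2))]
  calc J.card = Fintype.card {j // j ∈ J} := (Fintype.card_coe J).symm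
  _ = Matrix.rank (1 : Matrix {j // j ∈ J} {j // j ∈ J} R) := (Matrix.rank_one).symm
  _ = Matrix.rank (Y * X) := by rw [hYX]
  _ ≤ Matrix.rank Y := Matrix.rank_mul_le_left Y X
  _ ≤ Fintype.card {i // i ∈ I} := Matrix.rank_le_card_width Y
  _ = I.card := Fintype.card_coe I

lemma diag_equiv_multiset {r : ℕ} {a b : Fin r → ℤ}
    (h : BundleEquiv (Matrix.diagonal fun i => (T (a i) : R))
      (Matrix.diagonal fun i => (T (b i) : R))) :
    Finset.univ.val.map a = Finset.univ.val.map b := by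
  classical
  have hcount : ∀ c : ℤ, (Finset.univ.filter fun j => c ≤ a j).card =
      (Finset.univ.filter fun i => c ≤ b i).card := by
    intro c
    exact le_antisymm (diag_equiv_count h c) (diag_equiv_count h.symm c)
  have hsplit : ∀ (f : Fin r → ℤ) (c : ℤ), (Finset.univ.filter fun j => c ≤ f j).card =
      (Finset.univ.filter fun j => f j = c).card +
      (Finset.univ.filter fun j => c + 1 ≤ f j).card := by
    intro f c
    rw [← Finset.card_union_of_disjoint (by
      rw [Finset.disjoint_filter]
      intro x _ hx
      omega)]
    congr 1
    ext x
    simp only [Finset.mem_union, Finset.mem_filter, Finset.mem_univ, true_and]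
    omega
  have heqcount : ∀ c : ℤ, (Finset.univ.filter fun j => a j = c).card =
      (Finset.univ.filter fun i => b i = c).card := by
    intro c
    have h1 := hsplit a c
    have h2 := hsplit b c
    have h3 := hcount c
    have h4 := hcount (c + 1)
    omega
  refine Multiset.ext.2 fun c => ?_
  rw [Multiset.count_map, Multiset.count_map]
  have hmc : ∀ f : Fin r → ℤ, Multiset.filter (fun j => c = f j) Finset.univ.val
      = (Finset.univ.filter fun j => f j = c).val := by
    intro f
    rw [Finset.filter_val]
    exact Multiset.filter_congr (fun x _ => eq_comm)
  rw [hmc a, hmc b]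
  exact heqcount c

theorem grothendieck_splitting (r : ℕ)
    (A : Matrix (Fin r) (Fin r) (LaurentPolynomial ℂ)) (hA : IsUnit A.det) :
    (∃ a : Fin r → ℤ, BundleEquiv A (Matrix.diagonal fun i => T (a i))) ∧
    (∀ a b : Fin r → ℤ,
      BundleEquiv A (Matrix.diagonal fun i => T (a i)) →
      BundleEquiv A (Matrix.diagonal fun i => T (b i)) →
      Finset.univ.val.map a = Finset.univ.val.map b) := by
  constructor
  · exact main_exists r A hA
  · intro a b ha hb
    exact diag_equiv_multiset (ha.symm.trans hb)
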